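/- arXiv:2009.08222 — 2 statements merged into one kernel-verified Lean document; each statement's English description precedes it below -/
import Mathlib

section
/- Let t ≥ 2 and m ≥ 2t be integers, and let x be an integer with F_{m−2t+1} ≤ x < F_{m−2t+3}. Set (ε, y) = (1, x − F_{m−2t+2}) if F_{m−2t+2} ≤ x < F_{m−2t+3}, and (ε, y) = (0, x − F_{m−2t+1}) if F_{m−2t+1} ≤ x < F_{m−2t+2}. Then A(F_m + x) = t·A(x) − ε·A(y) + f(t)·2^{m−2t}. -/
open scoped BigOperators
open Filter Topology

/-- A natural number is a Fibonacci number, i.e. equals `F m` for some `m ≥ 1`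
(with `F 1 = F 2 = 1`). -/
def IsFibNum (x : ℕ) : Prop := ∃ m : ℕ, 0 < m ∧ Nat.fib m = x

/-- `R n` counts the partitions of `n` into distinct Fibonacci numbers:
the number of finite sets of Fibonacci numbers with sum `n` (so `R 0 = 1`). -/
noncomputable def R (n : ℕ) : ℕ :=
  Nat.card {S : Finset ℕ // (∀ x ∈ S, IsFibNum x) ∧ (∑ x ∈ S, x) = n}

/-- The summatory function `A H = ∑_{n=0}^{H} R n`. -/
noncomputable def A (H : ℕ) : ℕ := ∑ n ∈ Finset.range (H + 1), R n

/-- The summatory function extended to integer arguments: `A H = ∑_{n=0}^{H} R n`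
for `H ≥ 0`, and `A H = 0` for `H < 0`. -/
noncomputable def AZ (H : ℤ) : ℤ :=
  if H < 0 then 0 else ∑ n ∈ Finset.range (H.toNat + 1), (R n : ℤ)

/-- `f t = 1 + 2(4^{t-1} - 1)/3` (an integer for `t ≥ 1`). -/
def fInt (t : ℕ) : ℤ := 1 + 2 * (4 ^ (t - 1) - 1) / 3

attribute [local instance] Classical.propDecidable

open Finset

/-- universe finset of good sets with sum ≤ H -/
noncomputable def FW (H : ℕ) : Finset (Finset ℕ) :=
  ((Finset.range (H+1)).powerset).filter
    (fun S => (∀ a ∈ S, IsFibNum a) ∧ (∑ a ∈ S, a) ≤ H)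

noncomputable def FR (n : ℕ) : Finset (Finset ℕ) :=
  ((Finset.range (n+1)).powerset).filter
    (fun S => (∀ a ∈ S, IsFibNum a) ∧ (∑ a ∈ S, a) = n)

lemma mem_le_sum {S : Finset ℕ} {a : ℕ} (h : a ∈ S) : a ≤ ∑ b ∈ S, b :=
  Finset.single_le_sum (f := fun b => b) (fun i _ => Nat.zero_le i) h

lemma subset_range_of {S : Finset ℕ} {H : ℕ} (h2 : (∑ a ∈ S, a) ≤ H) :
    S ⊆ Finset.range (H+1) := by
  intro a ha
  simp only [Finset.mem_range]
  exact Nat.lt_succ_of_le (le_trans (mem_le_sum ha) h2)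

lemma mem_FW {S : Finset ℕ} {H : ℕ} :
    S ∈ FW H ↔ (∀ a ∈ S, IsFibNum a) ∧ (∑ a ∈ S, a) ≤ H := by
  constructor
  · intro h; exact (Finset.mem_filter.mp h).2
  · intro h
    exact Finset.mem_filter.mpr ⟨Finset.mem_powerset.mpr (subset_range_of h.2), h⟩

lemma mem_FR {S : Finset ℕ} {n : ℕ} :
    S ∈ FR n ↔ (∀ a ∈ S, IsFibNum a) ∧ (∑ a ∈ S, a) = n := by
  constructor
  · intro h; exact (Finset.mem_filter.mp h).2
  · intro h
    exact Finset.mem_filter.mpr ⟨Finset.mem_powerset.mpr (subset_range_of h.2.le), h⟩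

lemma R_card (n : ℕ) : R n = (FR n).card := by
  rw [R, ← Set.ncard_coe_finset, ← Nat.card_coe_set_eq]
  exact Nat.card_congr (Equiv.subtypeEquivRight (fun S => by simp [mem_FR]))

lemma A_card (H : ℕ) : A H = (FW H).card := by
  induction H with
  | zero =>
    rw [A, Finset.sum_range_one, R_card]
    congr 1
    ext S
    simp [mem_FR, mem_FW, Nat.le_zero]
  | succ H ih =>
    rw [A, Finset.sum_range_succ, ← A, ih, R_card]
    have hun : FW (H+1) = FW H ∪ FR (H+1) := by
      ext S
      simp only [mem_FW, mem_FR, Finset.mem_union]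
      constructor
      · rintro ⟨hg, hs⟩
        rcases Nat.lt_or_ge (∑ a ∈ S, a) (H+1) with h | h
        · exact Or.inl ⟨hg, Nat.lt_succ_iff.mp h⟩
        · exact Or.inr ⟨hg, le_antisymm hs h⟩
      · rintro (⟨hg, hs⟩ | ⟨hg, hs⟩)
        · exact ⟨hg, le_trans hs (Nat.le_succ H)⟩
        · exact ⟨hg, hs.le⟩
    have hdis : Disjoint (FW H) (FR (H+1)) := by
      rw [Finset.disjoint_left]
      intro S h1 h2
      have := (mem_FW.mp h1).2
      have := (mem_FR.mp h2).2
      omega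
    rw [hun, Finset.card_union_of_disjoint hdis]

/-- insert/erase bijection -/
lemma card_mem_filter (v H' : ℕ) (hv : IsFibNum v) :
    ((FW (H' + v)).filter (fun S => v ∈ S)).card
      = ((FW H').filter (fun S => v ∉ S)).card := by
  refine Finset.card_bij' (fun S _ => S.erase v) (fun T _ => insert v T) ?hi ?hj ?li ?ri
  case hi =>
    intro S hS
    obtain ⟨hSW, hvS⟩ := Finset.mem_filter.mp hS
    obtain ⟨hg, hs⟩ := mem_FW.mp hSW
    have hsum : v + ∑ a ∈ S.erase v, a = ∑ a ∈ S, a :=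
      Finset.add_sum_erase S (fun a => a) hvS
    have hg' : ∀ a ∈ S.erase v, IsFibNum a :=
      fun a ha => hg a (Finset.mem_of_mem_erase ha)
    have hs' : (∑ a ∈ S.erase v, a) ≤ H' := by omega
    exact Finset.mem_filter.mpr ⟨mem_FW.mpr ⟨hg', hs'⟩, Finset.notMem_erase v S⟩
  case hj =>
    intro T hT
    obtain ⟨hTW, hvT⟩ := Finset.mem_filter.mp hT
    obtain ⟨hg, hs⟩ := mem_FW.mp hTW
    have hsum : ∑ a ∈ insert v T, a = v + ∑ a ∈ T, a := Finset.sum_insert hvT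
    have hg' : ∀ a ∈ insert v T, IsFibNum a := by
      intro a ha
      rcases Finset.mem_insert.mp ha with rfl | ha
      · exact hv
      · exact hg a ha
    have hs' : (∑ a ∈ insert v T, a) ≤ H' + v := by omega
    exact Finset.mem_filter.mpr ⟨mem_FW.mpr ⟨hg', hs'⟩, Finset.mem_insert_self v T⟩
  case li =>
    intro S hS
    exact Finset.insert_erase (Finset.mem_filter.mp hS).2
  case ri =>
    intro T hT
    exact Finset.erase_insert (Finset.mem_filter.mp hT).2

lemma filter_mem_empty {v H : ℕ} (h : H < v) :
    ((FW H).filter (fun S => v ∈ S)) = ∅ := by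
  rw [Finset.filter_eq_empty_iff]
  intro S hS hvS
  have := (mem_FW.mp hS).2
  have := mem_le_sum hvS
  omega

lemma filter_not_mem_all {v H : ℕ} (h : H < v) :
    ((FW H).filter (fun S => v ∉ S)) = FW H := by
  rw [Finset.filter_true_of_mem]
  intro S hS hvS
  have := (mem_FW.mp hS).2
  have := mem_le_sum hvS
  omega

lemma card_mem_filter_of_lt (v H' : ℕ) (hv : IsFibNum v) (h : H' < v) :
    ((FW (H' + v)).filter (fun S => v ∈ S)).card = A H' := by
  rw [card_mem_filter v H' hv, filter_not_mem_all h, A_card]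

noncomputable def V (k : ℕ) : Finset ℕ := (Finset.Icc 2 (k+1)).image Nat.fib

lemma mem_V {a k : ℕ} : a ∈ V k ↔ ∃ j, 2 ≤ j ∧ j ≤ k+1 ∧ Nat.fib j = a := by
  simp [V, Finset.mem_image, Finset.mem_Icc]
  tauto

lemma card_V (k : ℕ) : (V k).card = k := by
  rw [V, Finset.card_image_of_injOn, Nat.card_Icc]
  · omega
  · intro i hi j hj hij
    simp only [Finset.coe_Icc, Set.mem_Icc] at hi hj
    exact Nat.fib_strictMonoOn.injOn (Set.mem_Ici.mpr hi.1) (Set.mem_Ici.mpr hj.1) hij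

lemma sum_V_le (k : ℕ) : (∑ a ∈ V k, a) ≤ Nat.fib (k+3) := by
  have h : (∑ a ∈ V k, a) = ∑ j ∈ Finset.Icc 2 (k+1), Nat.fib j := by
    rw [V, Finset.sum_image]
    intro i hi j hj hij
    simp only [Finset.coe_Icc, Set.mem_Icc] at hi hj
    exact Nat.fib_strictMonoOn.injOn (Set.mem_Ici.mpr hi.1) (Set.mem_Ici.mpr hj.1) hij
  rw [h]
  clear h
  induction k with
  | zero => simp
  | succ k ih =>
    rw [← Finset.insert_Icc_right_eq_Icc_add_one (by omega), Finset.sum_insert (by simp)]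
    have e1 : Nat.fib (k+1+1) = Nat.fib (k+2) := rfl
    have e2 : Nat.fib (k+1+3) = Nat.fib (k+4) := rfl
    have e3 : Nat.fib (k+4) = Nat.fib (k+2) + Nat.fib (k+3) := Nat.fib_add_two
    omega

lemma filter_small_eq_powerset (k z : ℕ) (hz : z < Nat.fib (k+2)) :
    ((FW (Nat.fib (k+3) + z)).filter
      (fun S => Nat.fib (k+3) ∉ S ∧ Nat.fib (k+2) ∉ S)) = (V k).powerset := by
  ext S
  simp only [Finset.mem_filter, Finset.mem_powerset, mem_FW]
  constructor
  · rintro ⟨⟨hg, hs⟩, h3, h2⟩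
    intro a ha
    obtain ⟨j, hj0, hj⟩ := hg a ha
    have haj : 2 ≤ (if j = 1 then 2 else j) ∧ Nat.fib (if j = 1 then 2 else j) = a := by
      split
      · subst hj; simp_all
      · exact ⟨by omega, hj⟩
    set j' := if j = 1 then 2 else j with hj'
    have ha_le : a ≤ ∑ b ∈ S, b := mem_le_sum ha
    have hlt : Nat.fib j' < Nat.fib (k+4) := by
      have h4 : Nat.fib (k+4) = Nat.fib (k+2) + Nat.fib (k+3) := Nat.fib_add_two
      omega
    have hj'lt : j' < k + 4 := by
      by_contra hcon
      exact absurd ((Nat.fib_lt_fib haj.1).mp hlt) (by omega)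
    have hne3 : j' ≠ k + 3 := by
      intro h; apply h3; rw [h] at haj; rw [haj.2]; exact ha
    have hne2 : j' ≠ k + 2 := by
      intro h; apply h2; rw [h] at haj; rw [haj.2]; exact ha
    exact mem_V.mpr ⟨j', haj.1, by omega, haj.2⟩
  · intro hSV
    have hsum : (∑ a ∈ S, a) ≤ Nat.fib (k+3) + z :=
      le_trans (le_trans (Finset.sum_le_sum_of_subset hSV) (sum_V_le k)) (by omega)
    have hfib : ∀ a ∈ S, IsFibNum a := by
      intro a ha
      obtain ⟨j, hj2, _, hj⟩ := mem_V.mp (hSV ha)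
      exact ⟨j, by omega, hj⟩
    refine ⟨⟨hfib, hsum⟩, ?_, ?_⟩
    · intro h
      obtain ⟨j, hj2, hjk, hj⟩ := mem_V.mp (hSV h)
      have : j = k+3 := Nat.fib_strictMonoOn.injOn (Set.mem_Ici.mpr hj2)
        (Set.mem_Ici.mpr (by omega)) hj
      omega
    · intro h
      obtain ⟨j, hj2, hjk, hj⟩ := mem_V.mp (hSV h)
      have : j = k+2 := Nat.fib_strictMonoOn.injOn (Set.mem_Ici.mpr hj2)
        (Set.mem_Ici.mpr (by omega)) hj
      omega

lemma fib_isFib (j : ℕ) (h : 0 < j) : IsFibNum (Nat.fib j) := ⟨j, h, rfl⟩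

/-- no set contains both fib(k+2) and fib(k+3) with small sum -/
lemma pair_empty (k z : ℕ) (hz : z < Nat.fib (k+2)) :
    ((FW (Nat.fib (k+3) + z)).filter
      (fun S => Nat.fib (k+2) ∈ S ∧ Nat.fib (k+3) ∈ S)) = ∅ := by
  rw [Finset.filter_eq_empty_iff]
  rintro S hS ⟨h2, h3⟩
  obtain ⟨hg, hs⟩ := mem_FW.mp hS
  have hne : Nat.fib (k+2) ≠ Nat.fib (k+3) :=
    Nat.ne_of_lt (Nat.fib_lt_fib_succ (n := k+2) (by omega))
  have hsub : {Nat.fib (k+2), Nat.fib (k+3)} ⊆ S := by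
    intro a ha
    rcases Finset.mem_insert.mp ha with rfl | ha
    · exact h2
    · rwa [Finset.mem_singleton.mp ha]
  have hps : (∑ a ∈ ({Nat.fib (k+2), Nat.fib (k+3)} : Finset ℕ), a)
      = Nat.fib (k+2) + Nat.fib (k+3) := Finset.sum_pair hne
  have hle : (∑ a ∈ ({Nat.fib (k+2), Nat.fib (k+3)} : Finset ℕ), a) ≤ ∑ a ∈ S, a :=
    Finset.sum_le_sum_of_subset hsub
  omega

/-- the error term E -/
lemma E_eval (k z : ℕ) (hz : z < Nat.fib (k+2)) :
    ((FW (Nat.fib (k+1) + z)).filter (fun S => Nat.fib (k+2) ∈ S)).card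
      = if Nat.fib k ≤ z then A (z - Nat.fib k) else 0 := by
  have hadd : Nat.fib (k+2) = Nat.fib k + Nat.fib (k+1) := Nat.fib_add_two
  split
  · next h =>
    have harg : Nat.fib (k+1) + z = (z - Nat.fib k) + Nat.fib (k+2) := by omega
    rw [harg, card_mem_filter _ _ (fib_isFib (k+2) (by omega)), filter_not_mem_all (by omega),
      A_card]
  · next h =>
    rw [filter_mem_empty (by omega), Finset.card_empty]

/-- Super-recursion over ℕ -/
lemma SRnat (k z : ℕ) (hz : z < Nat.fib (k+2)) :
    A (Nat.fib (k+3) + z) + (if Nat.fib k ≤ z then A (z - Nat.fib k) else 0)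
      = A z + A (Nat.fib (k+1) + z) + 2^k := by
  set N := Nat.fib (k+3) + z with hN
  have hadd3 : Nat.fib (k+3) = Nat.fib (k+1) + Nat.fib (k+2) := Nat.fib_add_two
  -- split on fib(k+3) ∈ S
  have split1 : (FW N).card
      = ((FW N).filter (fun S => Nat.fib (k+3) ∈ S)).card
        + ((FW N).filter (fun S => ¬ Nat.fib (k+3) ∈ S)).card :=
    (Finset.card_filter_add_card_filter_not _).symm
  -- term 1
  have t1 : ((FW N).filter (fun S => Nat.fib (k+3) ∈ S)).card = A z := by
    have harg : N = z + Nat.fib (k+3) := by omega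
    rw [harg, card_mem_filter _ _ (fib_isFib (k+3) (by omega)), filter_not_mem_all ?hlt, A_card]
    case hlt =>
      have : Nat.fib (k+2) ≤ Nat.fib (k+3) := Nat.fib_mono (by omega)
      omega
  -- split the rest on fib(k+2) ∈ S
  have split2 : ((FW N).filter (fun S => ¬ Nat.fib (k+3) ∈ S)).card
      = ((FW N).filter (fun S => ¬ Nat.fib (k+3) ∈ S ∧ Nat.fib (k+2) ∈ S)).card
        + ((FW N).filter (fun S => ¬ Nat.fib (k+3) ∈ S ∧ ¬ Nat.fib (k+2) ∈ S)).card := by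
    rw [← Finset.filter_filter, ← Finset.filter_filter,
      Finset.card_filter_add_card_filter_not]
  -- Q1 equals full fib(k+2) count
  have q1 : ((FW N).filter (fun S => ¬ Nat.fib (k+3) ∈ S ∧ Nat.fib (k+2) ∈ S)).card
      = ((FW N).filter (fun S => Nat.fib (k+2) ∈ S)).card := by
    have s3 : ((FW N).filter (fun S => Nat.fib (k+2) ∈ S)).card
        = ((FW N).filter (fun S => Nat.fib (k+2) ∈ S ∧ Nat.fib (k+3) ∈ S)).card
          + ((FW N).filter (fun S => Nat.fib (k+2) ∈ S ∧ ¬ Nat.fib (k+3) ∈ S)).card := by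
      rw [← Finset.filter_filter, ← Finset.filter_filter,
        Finset.card_filter_add_card_filter_not]
    rw [s3, pair_empty k z hz, Finset.card_empty]
    have : ((FW N).filter (fun S => ¬ Nat.fib (k+3) ∈ S ∧ Nat.fib (k+2) ∈ S))
        = ((FW N).filter (fun S => Nat.fib (k+2) ∈ S ∧ ¬ Nat.fib (k+3) ∈ S)) := by
      apply Finset.filter_congr
      intro S _
      tauto
    rw [this]
    omega
  -- Q1 via bijection
  have q1' : ((FW N).filter (fun S => Nat.fib (k+2) ∈ S)).card
      = ((FW (Nat.fib (k+1) + z)).filter (fun S => ¬ Nat.fib (k+2) ∈ S)).card := by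
    have harg : N = (Nat.fib (k+1) + z) + Nat.fib (k+2) := by omega
    rw [harg, card_mem_filter _ _ (fib_isFib (k+2) (by omega))]
  -- relation of the complement count with A and E
  have q1'' : ((FW (Nat.fib (k+1) + z)).filter (fun S => ¬ Nat.fib (k+2) ∈ S)).card
        + ((FW (Nat.fib (k+1) + z)).filter (fun S => Nat.fib (k+2) ∈ S)).card
      = A (Nat.fib (k+1) + z) := by
    rw [A_card]
    have := Finset.card_filter_add_card_filter_not
      (s := FW (Nat.fib (k+1) + z)) (fun S => Nat.fib (k+2) ∈ S)
    omega
  -- term 3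
  have t3 : ((FW N).filter (fun S => ¬ Nat.fib (k+3) ∈ S ∧ ¬ Nat.fib (k+2) ∈ S)).card
      = 2^k := by
    rw [filter_small_eq_powerset k z hz, Finset.card_powerset, card_V]
  have hE := E_eval k z hz
  have hAN : A N = (FW N).card := A_card N
  omega

lemma AZ_ofNat (n : ℕ) : AZ (n : ℤ) = (A n : ℤ) := by
  rw [AZ, if_neg (not_lt.mpr (Int.natCast_nonneg n)), A]
  push_cast
  simp

lemma AZ_neg {H : ℤ} (h : H < 0) : AZ H = 0 := if_pos h

/-- Super-recursion over ℤ -/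
lemma SRZ (k : ℕ) (x : ℤ) (hx0 : 0 ≤ x) (hx : x < Nat.fib (k+2)) :
    AZ (Nat.fib (k+3) + x) + AZ (x - Nat.fib k)
      = AZ x + AZ (Nat.fib (k+1) + x) + 2^k := by
  lift x to ℕ using hx0 with z
  have hz : z < Nat.fib (k+2) := by exact_mod_cast hx
  have h1 : (Nat.fib (k+3) : ℤ) + z = ((Nat.fib (k+3) + z : ℕ) : ℤ) := by push_cast; ring
  have h2 : (Nat.fib (k+1) : ℤ) + z = ((Nat.fib (k+1) + z : ℕ) : ℤ) := by push_cast; ring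
  rw [h1, h2, AZ_ofNat, AZ_ofNat, AZ_ofNat]
  have key := SRnat k z hz
  by_cases hc : Nat.fib k ≤ z
  · rw [if_pos hc] at key
    have h3 : (z : ℤ) - Nat.fib k = ((z - Nat.fib k : ℕ) : ℤ) := by
      push_cast [hc]; ring
    rw [h3, AZ_ofNat]
    exact_mod_cast key
  · rw [if_neg hc] at key
    rw [AZ_neg (by omega)]
    exact_mod_cast key

lemma three_dvd (s : ℕ) : (3:ℤ) ∣ 4^s - 1 := by
  induction s with
  | zero => simp
  | succ s ih =>
    have : (4:ℤ)^(s+1) - 1 = 4*(4^s - 1) + 3 := by ring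
    rw [this]
    exact dvd_add (Dvd.dvd.mul_left ih 4) ⟨1, by ring⟩

lemma fInt_mul_three (t : ℕ) : fInt t * 3 = 3 + 2 * (4 ^ (t-1) - 1) := by
  rw [fInt]
  have h := three_dvd (t-1)
  have h2 : (2:ℤ) * (4 ^ (t - 1) - 1) / 3 * 3 = 2 * (4 ^ (t - 1) - 1) :=
    Int.ediv_mul_cancel (by exact Dvd.dvd.mul_left h 2)
  ring_nf
  ring_nf at h2
  linarith

lemma fInt_two : fInt 2 = 3 := by decide

lemma fInt_succ (t : ℕ) (ht : 1 ≤ t) : fInt (t+1) = fInt t + 2^(2*t-1) := by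
  have h1 := fInt_mul_three (t+1)
  have h2 := fInt_mul_three t
  have e1 : t + 1 - 1 = (t-1) + 1 := by omega
  have e2 : (4:ℤ)^((t-1)+1) = 4 * 4^(t-1) := by ring
  have e3 : 2*t - 1 = 2*(t-1) + 1 := by omega
  have e4 : (2:ℤ)^(2*(t-1)+1) = 2 * 4^(t-1) := by
    rw [pow_succ, pow_mul]
    norm_num
    ring
  rw [e1, e2] at h1
  rw [e3, e4]
  linarith

lemma fib_le_fib {a b : ℕ} (h : a ≤ b) : (Nat.fib a : ℤ) ≤ (Nat.fib b : ℤ) := by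
  exact_mod_cast Nat.fib_mono h

lemma aux_cor (t : ℕ) (ht : 2 ≤ t) : ∀ (k : ℕ) (x : ℤ),
    (Nat.fib (k+1) : ℤ) ≤ x → x < (Nat.fib (k+3) : ℤ) →
    AZ ((Nat.fib (2*t+k) : ℤ) + x)
      = (t : ℤ) * AZ x - AZ (x - (Nat.fib (k+2) : ℤ)) + fInt t * 2^k := by
  induction t, ht using Nat.le_induction with
  | base =>
    intro k x hx1 hx2
    have hx0 : (0:ℤ) ≤ x := le_trans (by positivity) hx1
    have hadd3 : (Nat.fib (k+3) : ℤ) = Nat.fib (k+1) + Nat.fib (k+2) := by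
      exact_mod_cast (Nat.fib_add_two (n := k+1))
    have hadd2 : (Nat.fib (k+2) : ℤ) = Nat.fib k + Nat.fib (k+1) := by
      exact_mod_cast (Nat.fib_add_two (n := k))
    have S1 := SRZ (k+1) x hx0 (by exact_mod_cast hx2)
    have S2 := SRZ k (x - Nat.fib (k+1)) (by linarith) (by linarith)
    have e1 : (Nat.fib (k+1+3) : ℤ) + x = (Nat.fib (2*2+k) : ℤ) + x := by
      norm_num
      rw [show k+1+3 = 2*2+k by ring]
    have e2 : (Nat.fib (k+1+1) : ℤ) + x = (Nat.fib (k+2) : ℤ) + x := by norm_num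
    have e3 : (Nat.fib (k+3) : ℤ) + (x - Nat.fib (k+1)) = (Nat.fib (k+2) : ℤ) + x := by
      rw [hadd3]; ring
    have e4 : x - (Nat.fib (k+1) : ℤ) - Nat.fib k = x - Nat.fib (k+2) := by
      rw [hadd2]; ring
    have e5 : (Nat.fib (k+1) : ℤ) + (x - Nat.fib (k+1)) = x := by ring
    rw [e1, e2] at S1
    rw [e3, e4, e5] at S2
    rw [fInt_two]
    have e6 : (2:ℤ)^(k+1) = 2 * 2^k := by ring
    rw [e6] at S1
    push_cast
    linarith
  | succ t ht ih =>
    intro k x hx1 hx2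
    have hx0 : (0:ℤ) ≤ x := le_trans (by positivity) hx1
    obtain ⟨s, rfl⟩ : ∃ s, t = s + 2 := ⟨t - 2, by omega⟩
    have S1 := SRZ (2*s+k+3) x hx0 ?hr
    case hr =>
      calc x < (Nat.fib (k+3) : ℤ) := hx2
        _ ≤ (Nat.fib (2*s+k+3+2) : ℤ) := fib_le_fib (by omega)
    have hz : AZ (x - (Nat.fib (2*s+k+3) : ℤ)) = 0 := by
      apply AZ_neg
      have : x < (Nat.fib (2*s+k+3) : ℤ) :=
        lt_of_lt_of_le hx2 (fib_le_fib (by omega))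
      linarith
    rw [hz] at S1
    have IH := ih k x hx1 hx2
    have e1 : (Nat.fib (2*s+k+3+3) : ℤ) + x = (Nat.fib (2*(s+2+1)+k) : ℤ) + x := by
      norm_num
      rw [show 2*s+k+3+3 = 2*(s+2+1)+k by ring]
    have e2 : (Nat.fib (2*s+k+3+1) : ℤ) + x = (Nat.fib (2*(s+2)+k) : ℤ) + x := by
      norm_num
      rw [show 2*s+k+3+1 = 2*(s+2)+k by ring]
    rw [e1, e2] at S1
    have hf := fInt_succ (s+2) (by omega)
    have e3 : (2:ℤ)^(2*(s+2)-1) * 2^k = 2^(2*s+k+3) := by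
      rw [← pow_add]
      norm_num
      rw [show 2*(s+2)-1+k = 2*s+k+3 by omega]
    have goalf : fInt (s+2+1) * 2^k = fInt (s+2) * 2^k + 2^(2*s+k+3) := by
      rw [hf, add_mul, e3]
    push_cast at S1 IH ⊢
    linarith


/-- Corollary 3.4. -/
theorem summatory_super_recursion_cor (t m : ℕ) (ht : 2 ≤ t) (hm : 2 * t ≤ m) (x : ℤ)
    (hx1 : (Nat.fib (m - 2 * t + 1) : ℤ) ≤ x)
    (hx2 : x < (Nat.fib (m - 2 * t + 3) : ℤ))
    (ε y : ℤ)
    (hcase :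
      ((Nat.fib (m - 2 * t + 2) : ℤ) ≤ x ∧ x < (Nat.fib (m - 2 * t + 3) : ℤ) ∧
        ε = 1 ∧ y = x - (Nat.fib (m - 2 * t + 2) : ℤ)) ∨
      ((Nat.fib (m - 2 * t + 1) : ℤ) ≤ x ∧ x < (Nat.fib (m - 2 * t + 2) : ℤ) ∧
        ε = 0 ∧ y = x - (Nat.fib (m - 2 * t + 1) : ℤ))) :
    AZ ((Nat.fib m : ℤ) + x) =
      (t : ℤ) * AZ x - ε * AZ y + fInt t * 2 ^ (m - 2 * t) := by
  obtain ⟨k, rfl⟩ : ∃ k, m = 2*t + k := ⟨m - 2*t, by omega⟩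
  rw [show 2*t+k-2*t = k from by omega] at hx1 hx2 hcase ⊢
  have main := aux_cor t ht k x hx1 hx2
  rcases hcase with ⟨h1, h2, he, hy⟩ | ⟨h1, h2, he, hy⟩
  · subst he hy
    rw [main]; ring
  · subst he hy
    have h0 : AZ (x - (Nat.fib (k + 2) : ℤ)) = 0 := AZ_neg (by linarith)
    rw [main, h0]
    ring
end

section
/- For every integer m ≥ 4, A(2F_{m−1}) = A(F_{m−3}) + A(F_{m−1}) + 2^{m−3} − 1. -/
open scoped BigOperators
open Filter Topology

attribute [local instance] Classical.propDecidable

/-- The finset of all "fibonacci subsets" with sum at most `H`. -/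
noncomputable def FS (H : ℕ) : Finset (Finset ℕ) :=
  (Finset.range (H + 1)).powerset.filter
    (fun S => (∀ x ∈ S, IsFibNum x) ∧ (∑ x ∈ S, x) ≤ H)

lemma elem_le_sum {S : Finset ℕ} {x : ℕ} (hx : x ∈ S) : x ≤ ∑ y ∈ S, y :=
  Finset.single_le_sum (f := fun y => y) (fun i _ => Nat.zero_le i) hx

lemma mem_FS {H : ℕ} {S : Finset ℕ} :
    S ∈ FS H ↔ (∀ x ∈ S, IsFibNum x) ∧ (∑ x ∈ S, x) ≤ H := by
  constructor
  · intro h; exact (Finset.mem_filter.mp h).2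
  · intro h
    refine Finset.mem_filter.mpr ⟨Finset.mem_powerset.mpr ?_, h⟩
    intro x hx
    have := elem_le_sum hx
    exact Finset.mem_range.mpr (by omega)

lemma R_eq (n : ℕ) : R n = ((FS n).filter (fun S => (∑ x ∈ S, x) = n)).card := by
  unfold R
  have h : ∀ S : Finset ℕ,
      ((∀ x ∈ S, IsFibNum x) ∧ (∑ x ∈ S, x) = n) ↔
        S ∈ (FS n).filter (fun S => (∑ x ∈ S, x) = n) := by
    intro S
    simp only [Finset.mem_filter, mem_FS]
    constructor
    · rintro ⟨h1, h2⟩; exact ⟨⟨h1, le_of_eq h2⟩, h2⟩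
    · rintro ⟨⟨h1, _⟩, h2⟩; exact ⟨h1, h2⟩
  rw [Nat.card_congr (Equiv.subtypeEquivRight h)]
  exact Nat.card_eq_finsetCard _

lemma A_eq (H : ℕ) : A H = (FS H).card := by
  unfold A
  rw [Finset.card_eq_sum_card_fiberwise (s := FS H) (t := Finset.range (H + 1))
      (f := fun S => ∑ x ∈ S, x)
      (fun S hS => Finset.mem_range.mpr (Nat.lt_succ_of_le (mem_FS.mp hS).2))]
  refine Finset.sum_congr rfl (fun n hn => ?_)
  have hn' : n ≤ H := Nat.lt_succ_iff.mp (Finset.mem_range.mp hn)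
  rw [R_eq]
  congr 1
  ext S
  simp only [Finset.mem_filter, mem_FS]
  constructor
  · rintro ⟨⟨h1, _⟩, h3⟩; exact ⟨⟨h1, by omega⟩, h3⟩
  · rintro ⟨⟨h1, _⟩, h3⟩; exact ⟨⟨h1, by omega⟩, h3⟩

lemma isFibNum_fib {i : ℕ} (hi : 0 < i) : IsFibNum (Nat.fib i) := ⟨i, hi, rfl⟩

lemma one_le_of_isFibNum {x : ℕ} (hx : IsFibNum x) : 1 ≤ x := by
  obtain ⟨i, hi, rfl⟩ := hx
  exact Nat.fib_pos.mpr hi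

lemma isFibNum_le {x j : ℕ} (hx : IsFibNum x) (h : x < Nat.fib (j + 1)) :
    x ≤ Nat.fib j := by
  obtain ⟨i, _, rfl⟩ := hx
  rcases le_or_gt i j with h' | h'
  · exact Nat.fib_mono h'
  · exact absurd h (not_lt.mpr (Nat.fib_mono h'))

lemma sum_fib_shift (k : ℕ) :
    (∑ j ∈ Finset.range (k + 1), Nat.fib (j + 2)) + 2 = Nat.fib (k + 4) := by
  induction k with
  | zero => simp [Nat.fib]
  | succ n ih =>
    rw [Finset.sum_range_succ]
    have h : Nat.fib (n + 5) = Nat.fib (n + 3) + Nat.fib (n + 4) := Nat.fib_add_two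
    have r1 : Nat.fib (n + 1 + 4) = Nat.fib (n + 5) := rfl
    have r2 : Nat.fib (n + 1 + 2) = Nat.fib (n + 3) := rfl
    omega

lemma key_identity (k : ℕ) :
    A (2 * Nat.fib (k + 3)) + 1 = A (Nat.fib (k + 1)) + A (Nat.fib (k + 3)) + 2 ^ (k + 1) := by
  -- basic Fibonacci facts
  have hfib3 : Nat.fib (k + 3) = Nat.fib (k + 1) + Nat.fib (k + 2) := Nat.fib_add_two
  have hfib4 : Nat.fib (k + 4) = Nat.fib (k + 2) + Nat.fib (k + 3) := Nat.fib_add_two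
  have hfib5 : Nat.fib (k + 5) = Nat.fib (k + 3) + Nat.fib (k + 4) := Nat.fib_add_two
  have r1 : Nat.fib (k + 4 + 1) = Nat.fib (k + 5) := rfl
  have r2 : Nat.fib (k + 3 + 1) = Nat.fib (k + 4) := rfl
  have r3 : Nat.fib (k + 2 + 1) = Nat.fib (k + 3) := rfl
  have r4 : Nat.fib (k + 1 + 1) = Nat.fib (k + 2) := rfl
  have hbc : Nat.fib (k + 2) < Nat.fib (k + 3) := Nat.fib_lt_fib_succ (by omega)
  have hcd : Nat.fib (k + 3) < Nat.fib (k + 4) := Nat.fib_lt_fib_succ (by omega)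
  have ha1 : 1 ≤ Nat.fib (k + 1) := Nat.fib_pos.mpr (by omega)
  -- chain bound : a fibonacci number ≤ 2 fib (k+3) distinct from fib (k+4), fib (k+3)
  -- is at most fib (k+2)
  have hchain : ∀ x, IsFibNum x → x ≤ 2 * Nat.fib (k + 3) →
      x ≠ Nat.fib (k + 4) → x ≠ Nat.fib (k + 3) → x ≤ Nat.fib (k + 2) := by
    intro x hx h1 h2 h3
    have e1 : x ≤ Nat.fib (k + 4) := isFibNum_le hx (by omega)
    have e2 : x ≤ Nat.fib (k + 3) := isFibNum_le hx (by omega)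
    exact isFibNum_le hx (by omega)
  -- the finset of fibonacci values at most fib (k+2)
  set V : Finset ℕ := (Finset.range (k + 1)).image (fun j => Nat.fib (j + 2)) with hV
  have memV : ∀ x, x ∈ V ↔ (IsFibNum x ∧ x ≤ Nat.fib (k + 2)) := by
    intro x
    rw [hV]
    simp only [Finset.mem_image, Finset.mem_range]
    constructor
    · rintro ⟨j, hj, rfl⟩
      exact ⟨isFibNum_fib (by omega), Nat.fib_mono (by omega)⟩
    · rintro ⟨⟨i, hi, rfl⟩, hle⟩
      rcases Nat.lt_or_ge i 2 with h2 | h2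
      · refine ⟨0, by omega, ?_⟩
        have : i = 1 := by omega
        subst this; rfl
      · refine ⟨i - 2, ?_, by rw [Nat.sub_add_cancel h2]⟩
        by_contra hgt
        have : Nat.fib (k + 3) ≤ Nat.fib i := Nat.fib_mono (by omega)
        omega
  have cardV : V.card = k + 1 := by
    rw [hV, Finset.card_image_of_injective _ Nat.fib_add_two_strictMono.injective,
      Finset.card_range]
  have sumV : (∑ x ∈ V, x) + 2 = Nat.fib (k + 4) := by
    rw [hV, Finset.sum_image
      (fun x _ y _ h => Nat.fib_add_two_strictMono.injective h)]
    exact sum_fib_shift k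
  have sumV' : ∑ x ∈ V, x ≤ 2 * Nat.fib (k + 3) := by omega
  -- partition identities
  have e1 := Finset.card_filter_add_card_filter_not
    (s := FS (2 * Nat.fib (k + 3))) (p := fun S => Nat.fib (k + 4) ∈ S)
  have e2 := Finset.card_filter_add_card_filter_not
    (s := (FS (2 * Nat.fib (k + 3))).filter (fun S => ¬Nat.fib (k + 4) ∈ S))
    (p := fun S => (∑ x ∈ S, x) ≤ Nat.fib (k + 3))
  have e3 := Finset.card_filter_add_card_filter_not
    (s := ((FS (2 * Nat.fib (k + 3))).filter
      (fun S => ¬Nat.fib (k + 4) ∈ S)).filter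
        (fun S => ¬(∑ x ∈ S, x) ≤ Nat.fib (k + 3)))
    (p := fun S => Nat.fib (k + 3) ∈ S)
  have ePow := Finset.card_filter_add_card_filter_not
    (s := V.powerset) (p := fun S => (∑ x ∈ S, x) ≤ Nat.fib (k + 3))
  have eG := Finset.card_filter_add_card_filter_not
    (s := V.powerset.filter (fun S => (∑ x ∈ S, x) ≤ Nat.fib (k + 3)))
    (p := fun S => S = ∅)
  have cPow : V.powerset.card = 2 ^ (k + 1) := by
    rw [Finset.card_powerset, cardV]
  -- class 1 : sets containing fib (k+4)
  have c1 : ((FS (2 * Nat.fib (k + 3))).filter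
      (fun S => Nat.fib (k + 4) ∈ S)).card = (FS (Nat.fib (k + 1))).card := by
    refine Finset.card_bij' (fun S _ => S.erase (Nat.fib (k + 4)))
      (fun T _ => insert (Nat.fib (k + 4)) T) ?_ ?_ ?_ ?_
    · intro S hS
      obtain ⟨hS', hd⟩ := Finset.mem_filter.mp hS
      obtain ⟨hfib, hsum⟩ := mem_FS.mp hS'
      refine mem_FS.mpr ⟨fun x hx => hfib x (Finset.mem_of_mem_erase hx), ?_⟩
      have he : (∑ x ∈ S.erase (Nat.fib (k + 4)), x) + Nat.fib (k + 4) = ∑ x ∈ S, x :=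
        Finset.sum_erase_add _ _ hd
      omega
    · intro T hT
      obtain ⟨hfib, hsum⟩ := mem_FS.mp hT
      have hdT : Nat.fib (k + 4) ∉ T := by
        intro hmem
        have := elem_le_sum hmem
        omega
      refine Finset.mem_filter.mpr ⟨mem_FS.mpr ⟨?_, ?_⟩, Finset.mem_insert_self _ _⟩
      · intro x hx
        rcases Finset.mem_insert.mp hx with rfl | hx'
        · exact isFibNum_fib (by omega)
        · exact hfib x hx'
      · rw [Finset.sum_insert hdT]; omega
    · intro S hS
      exact Finset.insert_erase (Finset.mem_filter.mp hS).2
    · intro T hT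
      apply Finset.erase_insert
      obtain ⟨_, hsum⟩ := mem_FS.mp hT
      intro hmem
      have := elem_le_sum hmem
      omega
  -- class 2 : sets avoiding fib (k+4) with sum ≤ fib (k+3)
  have c2 : ((FS (2 * Nat.fib (k + 3))).filter
      (fun S => ¬Nat.fib (k + 4) ∈ S)).filter
        (fun S => (∑ x ∈ S, x) ≤ Nat.fib (k + 3)) = FS (Nat.fib (k + 3)) := by
    ext S
    simp only [Finset.mem_filter, mem_FS]
    constructor
    · rintro ⟨⟨⟨h1, _⟩, _⟩, h4⟩; exact ⟨h1, h4⟩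
    · rintro ⟨h1, h2⟩
      refine ⟨⟨⟨h1, by omega⟩, fun hd => ?_⟩, h2⟩
      have := elem_le_sum hd
      omega
  have c2' := congrArg Finset.card c2
  -- class 4 : sets avoiding fib (k+4) and fib (k+3) with sum > fib (k+3)
  have c4 : (((FS (2 * Nat.fib (k + 3))).filter
      (fun S => ¬Nat.fib (k + 4) ∈ S)).filter
        (fun S => ¬(∑ x ∈ S, x) ≤ Nat.fib (k + 3))).filter
          (fun S => ¬Nat.fib (k + 3) ∈ S)
      = V.powerset.filter (fun S => ¬(∑ x ∈ S, x) ≤ Nat.fib (k + 3)) := by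
    ext S
    simp only [Finset.mem_filter, Finset.mem_powerset, mem_FS]
    constructor
    · rintro ⟨⟨⟨⟨h1, h2⟩, h3⟩, h4⟩, h5⟩
      refine ⟨?_, h4⟩
      intro x hx
      have hf := h1 x hx
      have hxle := elem_le_sum hx
      exact (memV x).mpr ⟨hf, hchain x hf (by omega)
        (fun h => h3 (h ▸ hx)) (fun h => h5 (h ▸ hx))⟩
    · rintro ⟨hsub, hgt⟩
      have hmem : ∀ x ∈ S, IsFibNum x ∧ x ≤ Nat.fib (k + 2) :=
        fun x hx => (memV x).mp (hsub hx)
      have hsle : (∑ x ∈ S, x) ≤ ∑ x ∈ V, x :=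
        Finset.sum_le_sum_of_subset hsub
      refine ⟨⟨⟨⟨fun x hx => (hmem x hx).1, by omega⟩, fun hd => ?_⟩, hgt⟩, fun hc => ?_⟩
      · have := (hmem _ hd).2; omega
      · have := (hmem _ hc).2; omega
  have c4' := congrArg Finset.card c4
  -- the empty set is the unique set with sum ≤ fib (k+3) that is empty
  have hGe : (V.powerset.filter (fun S => (∑ x ∈ S, x) ≤ Nat.fib (k + 3))).filter
      (fun S => S = ∅) = {∅} := by
    ext S
    simp only [Finset.mem_filter, Finset.mem_powerset, Finset.mem_singleton]
    constructor
    · rintro ⟨_, h⟩; exact h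
    · rintro rfl
      exact ⟨⟨Finset.empty_subset _, by simp⟩, rfl⟩
  have hGe' : ((V.powerset.filter (fun S => (∑ x ∈ S, x) ≤ Nat.fib (k + 3))).filter
      (fun S => S = ∅)).card = 1 := by rw [hGe]; rfl
  -- class 3 : sets containing fib (k+3), avoiding fib (k+4), sum > fib (k+3)
  have c3 : ((((FS (2 * Nat.fib (k + 3))).filter
      (fun S => ¬Nat.fib (k + 4) ∈ S)).filter
        (fun S => ¬(∑ x ∈ S, x) ≤ Nat.fib (k + 3))).filter
          (fun S => Nat.fib (k + 3) ∈ S)).card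
      = ((V.powerset.filter (fun S => (∑ x ∈ S, x) ≤ Nat.fib (k + 3))).filter
          (fun S => ¬S = ∅)).card := by
    refine Finset.card_bij' (fun S _ => S.erase (Nat.fib (k + 3)))
      (fun T _ => insert (Nat.fib (k + 3)) T) ?_ ?_ ?_ ?_
    · intro S hS
      simp only [Finset.mem_filter, mem_FS] at hS
      obtain ⟨⟨⟨⟨h1, h2⟩, h3⟩, h4⟩, h5⟩ := hS
      have hesum : (∑ x ∈ S.erase (Nat.fib (k + 3)), x) + Nat.fib (k + 3) = ∑ x ∈ S, x :=
        Finset.sum_erase_add _ _ h5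
      simp only [Finset.mem_filter, Finset.mem_powerset]
      refine ⟨⟨?_, by omega⟩, ?_⟩
      · intro x hx
        have hxS := Finset.mem_of_mem_erase hx
        have hxne := Finset.ne_of_mem_erase hx
        have hf := h1 x hxS
        have hxle := elem_le_sum hxS
        exact (memV x).mpr ⟨hf, hchain x hf (by omega) (fun h => h3 (h ▸ hxS)) hxne⟩
      · intro he
        rw [he, Finset.sum_empty] at hesum
        omega
    · intro T hT
      simp only [Finset.mem_filter, Finset.mem_powerset] at hT
      obtain ⟨⟨hsub, hsle⟩, hne⟩ := hT
      have hmem : ∀ x ∈ T, IsFibNum x ∧ x ≤ Nat.fib (k + 2) :=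
        fun x hx => (memV x).mp (hsub hx)
      have hcT : Nat.fib (k + 3) ∉ T := by
        intro h
        have := (hmem _ h).2
        omega
      have hTpos : 1 ≤ ∑ x ∈ T, x := by
        obtain ⟨x, hx⟩ := Finset.nonempty_iff_ne_empty.mpr hne
        calc 1 ≤ x := one_le_of_isFibNum (hmem x hx).1
          _ ≤ _ := elem_le_sum hx
      simp only [Finset.mem_filter, mem_FS]
      rw [Finset.sum_insert hcT]
      refine ⟨⟨⟨⟨?_, by omega⟩, ?_⟩, by omega⟩, Finset.mem_insert_self _ _⟩
      · intro x hx
        rcases Finset.mem_insert.mp hx with rfl | hx'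
        · exact isFibNum_fib (by omega)
        · exact (hmem x hx').1
      · intro hd
        rcases Finset.mem_insert.mp hd with h | h
        · omega
        · have := (hmem _ h).2; omega
    · intro S hS
      simp only [Finset.mem_filter] at hS
      exact Finset.insert_erase hS.2
    · intro T hT
      apply Finset.erase_insert
      simp only [Finset.mem_filter, Finset.mem_powerset] at hT
      intro h
      have := ((memV _).mp (hT.1.1 h)).2
      omega
  rw [A_eq (2 * Nat.fib (k + 3)), A_eq (Nat.fib (k + 1)), A_eq (Nat.fib (k + 3))]
  omega

/-- `A(2F_{m-1}) = A(F_{m-3}) + A(F_{m-1}) + 2^{m-3} - 1` for `m ≥ 4`. -/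
theorem summatory_at_two_fib (m : ℕ) (hm : 4 ≤ m) :
    (A (2 * Nat.fib (m - 1)) : ℤ) =
      (A (Nat.fib (m - 3)) : ℤ) + (A (Nat.fib (m - 1)) : ℤ) + 2 ^ (m - 3) - 1 := by
  obtain ⟨k, rfl⟩ : ∃ k, m = k + 4 := ⟨m - 4, by omega⟩
  have h1 : k + 4 - 1 = k + 3 := rfl
  have h3 : k + 4 - 3 = k + 1 := rfl
  rw [h1, h3]
  have key := key_identity k
  have := congrArg (Nat.cast : ℕ → ℤ) key
  push_cast at this
  linarith
end
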